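/- Let k be a positive integer and let Γ_k = {(x,y,z) ∈ H : x ∈ ℤ, y ∈ ℤ, kz ∈ ℤ}. If Φ is a continuous group automorphism of the Heisenberg group H with Φ(Γ_k) = Γ_k, then either Φ(0,0,z) = (0,0,z) for all z ∈ ℝ, or Φ(0,0,z) = (0,0,−z) for all z ∈ ℝ. -/

import Mathlib

set_option linter.unreachableTactic false
set_option linter.unusedTactic false

/-- The Heisenberg group: ℝ³ with (a,b,c)·(x,y,z) = (a+x, b+y, c+z+a·y). -/
@[ext]
structure Heis where
  x : ℝ
  y : ℝ
  z : ℝ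

namespace Heis

instance : Mul Heis := ⟨fun p q => ⟨p.x + q.x, p.y + q.y, p.z + q.z + p.x * q.y⟩⟩
instance : One Heis := ⟨⟨0, 0, 0⟩⟩
instance : Inv Heis := ⟨fun p => ⟨-p.x, -p.y, p.x * p.y - p.z⟩⟩

@[simp] theorem mul_x (p q : Heis) : (p * q).x = p.x + q.x := rfl
@[simp] theorem mul_y (p q : Heis) : (p * q).y = p.y + q.y := rfl
@[simp] theorem mul_z (p q : Heis) : (p * q).z = p.z + q.z + p.x * q.y := rfl
@[simp] theorem one_x : (1 : Heis).x = 0 := rfl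
@[simp] theorem one_y : (1 : Heis).y = 0 := rfl
@[simp] theorem one_z : (1 : Heis).z = 0 := rfl
@[simp] theorem inv_x (p : Heis) : p⁻¹.x = -p.x := rfl
@[simp] theorem inv_y (p : Heis) : p⁻¹.y = -p.y := rfl
@[simp] theorem inv_z (p : Heis) : p⁻¹.z = p.x * p.y - p.z := rfl

instance : Group Heis where
  mul := (· * ·)
  one := 1
  inv := (·⁻¹)
  mul_assoc p q r := by ext <;> simp <;> try ring
  one_mul p := by ext <;> simp
  mul_one p := by ext <;> simp
  inv_mul_cancel p := by ext <;> simp <;> try ring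

end Heis

/-- The Euclidean topology of ℝ³ on the Heisenberg group. -/
instance : TopologicalSpace Heis :=
  TopologicalSpace.induced (fun p => (p.x, p.y, p.z)) inferInstance

/-- The lattice Γ_k = {(x,y,z) ∈ H : x ∈ ℤ, y ∈ ℤ, kz ∈ ℤ}, as a set. -/
def GammaSet (k : ℕ) : Set Heis :=
  {p : Heis | (∃ m : ℤ, p.x = m) ∧ (∃ n : ℤ, p.y = n) ∧ (∃ l : ℤ, (k : ℝ) * p.z = l)}

-- auxiliary lemmas
namespace Heis

theorem central_iff (p : Heis) : (∀ q : Heis, p * q = q * p) ↔ p.x = 0 ∧ p.y = 0 := by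
  constructor
  · intro h
    constructor
    · have := congrArg Heis.z (h ⟨0, 1, 0⟩)
      simpa using this
    · have := congrArg Heis.z (h ⟨1, 0, 0⟩)
      simp at this; linarith
  · rintro ⟨hx, hy⟩ q
    ext <;> simp [hx, hy] <;> ring

theorem continuous_z : Continuous (fun p : Heis => p.z) := by
  have h : Continuous (fun p : Heis => (p.x, p.y, p.z)) := continuous_induced_dom
  exact (continuous_snd.comp continuous_snd).comp h

theorem continuous_mk0 : Continuous (fun z : ℝ => (⟨0, 0, z⟩ : Heis)) := by
  apply continuous_induced_rng.2
  exact continuous_const.prodMk (continuous_const.prodMk continuous_id)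

end Heis

theorem stmt4 (k : ℕ) (hk : 0 < k) (Φ : Heis ≃* Heis) (hΦ : Continuous Φ)
    (hΓ : Φ '' GammaSet k = GammaSet k) :
    (∀ z : ℝ, Φ ⟨0, 0, z⟩ = ⟨0, 0, z⟩) ∨ (∀ z : ℝ, Φ ⟨0, 0, z⟩ = ⟨0, 0, -z⟩) := by
  -- Φ preserves the center
  have hcent : ∀ z : ℝ, (Φ ⟨0, 0, z⟩).x = 0 ∧ (Φ ⟨0, 0, z⟩).y = 0 := by
    intro z
    rw [← Heis.central_iff]
    intro q
    have := (Heis.central_iff ⟨0, 0, z⟩).2 ⟨rfl, rfl⟩ (Φ.symm q)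
    have h2 := congrArg Φ this
    simpa [map_mul] using h2
  set f : ℝ → ℝ := fun z => (Φ ⟨0, 0, z⟩).z with hf
  have hform : ∀ z : ℝ, Φ ⟨0, 0, z⟩ = ⟨0, 0, f z⟩ := by
    intro z; ext
    · exact (hcent z).1
    · exact (hcent z).2
    · rfl
  -- f is additive
  have hmul : ∀ z w : ℝ, (⟨0, 0, z⟩ : Heis) * ⟨0, 0, w⟩ = ⟨0, 0, z + w⟩ := by
    intro z w; ext <;> simp
  have hadd : ∀ z w : ℝ, f (z + w) = f z + f w := by
    intro z w
    have := congrArg Heis.z (congrArg Φ (hmul z w))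
    rw [map_mul, hform z, hform w] at this
    simpa [hf] using this.symm
  have hzero : f 0 = 0 := by
    have := hadd 0 0; norm_num at this; linarith
  -- f is continuous
  have hcont : Continuous f :=
    Heis.continuous_z.comp (hΦ.comp Heis.continuous_mk0)
  set F : ℝ →+ ℝ := AddMonoidHom.mk' f hadd with hF
  have hlin : ∀ z : ℝ, f z = z * f 1 := by
    intro z
    have := (F.toRealLinearMap hcont).map_smul z 1
    simpa [hF, smul_eq_mul, mul_comm] using this
  set c : ℝ := f 1 with hc
  -- c is an integer
  have h1k : (⟨0, 0, (k : ℝ)⁻¹⟩ : Heis) ∈ GammaSet k := by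
    refine ⟨⟨0, by simp⟩, ⟨0, by simp⟩, ⟨1, ?_⟩⟩
    have : (k : ℝ) ≠ 0 := Nat.cast_ne_zero.2 hk.ne'
    field_simp
    simp
  have himg : Φ ⟨0, 0, (k : ℝ)⁻¹⟩ ∈ GammaSet k := by
    rw [← hΓ]; exact ⟨_, h1k, rfl⟩
  obtain ⟨_, _, ⟨l, hl⟩⟩ := himg
  rw [hform] at hl
  have hkne : (k : ℝ) ≠ 0 := Nat.cast_ne_zero.2 hk.ne'
  have hcl : c = (l : ℝ) := by
    have := hl
    rw [hlin] at this
    field_simp at this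
    rw [hc, ← this]
  -- c is invertible in ℤ: find the preimage of (0,0,1/k)
  obtain ⟨p, hpΓ, hpφ⟩ : ∃ p ∈ GammaSet k, Φ p = ⟨0, 0, (k : ℝ)⁻¹⟩ := by
    have : (⟨0, 0, (k : ℝ)⁻¹⟩ : Heis) ∈ Φ '' GammaSet k := by rw [hΓ]; exact h1k
    obtain ⟨p, hp, hpe⟩ := this
    exact ⟨p, hp, hpe⟩
  -- p is central
  have hpc : p.x = 0 ∧ p.y = 0 := by
    rw [← Heis.central_iff]
    intro q
    apply Φ.injective
    rw [map_mul, map_mul, hpφ]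
    exact (Heis.central_iff _).2 ⟨rfl, rfl⟩ _
  have hp3 : p = ⟨0, 0, p.z⟩ := by ext <;> simp [hpc.1, hpc.2]
  obtain ⟨_, _, ⟨m, hm⟩⟩ := hpΓ
  have hfz : f p.z = (k : ℝ)⁻¹ := by
    have := congrArg Heis.z hpφ
    rw [hp3] at hpφ ⊢
    simpa [hf] using congrArg Heis.z hpφ
  have hcm : (l : ℝ) * m = 1 := by
    have h1 : c * p.z = (k : ℝ)⁻¹ := by rw [mul_comm, ← hlin]; exact hfz
    have : c * ((k : ℝ) * p.z) = 1 := by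
      rw [mul_comm (k:ℝ) p.z, ← mul_assoc, h1]
      field_simp
    rw [hcl, hm] at this
    exact this
  have hlm : l * m = 1 := by exact_mod_cast hcm
  have : l = 1 ∨ l = -1 := Int.isUnit_iff.1 (IsUnit.of_mul_eq_one (a := l) m hlm)
  rcases this with h | h
  · left
    intro z
    rw [hform, hlin, hcl, h]
    norm_num
  · right
    intro z
    rw [hform, hlin, hcl, h]
    ext <;> simp
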